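/- (Theorem 3(iii), collapse part.) Suppose 𝔼[L_A] > 0, 𝔼[L_B] > 0, and set a = 𝔼[L_A] + β_B·𝔼[L_B], b = 𝔼[L_B] + β_A·𝔼[L_A]. Fix S_total > 0 and let s_A = S_total·a/(a+b), s_B = S_total·b/(a+b), p*_opt = S_total/(S_total + a + b). Assume S_A = s_A almost surely and S_B = s_B almost surely. Then for every attack size p with p*_opt < p < 1, the set of stable points is empty: 𝒫 = ∅ (the system collapses completely). -/

import Mathlib

open MeasureTheory ProbabilityTheory

variable {Ω : Type*} [MeasureSpace Ω]

/-- The survival event `E(x,y) = {S_A > x + β_B·y} ∩ {S_B > y + β_A·x}`. -/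
def survEvent (SA SB : Ω → ℝ) (βA βB x y : ℝ) : Set Ω :=
  {ω | x + βB * y < SA ω} ∩ {ω | y + βA * x < SB ω}

/-- `g(x,y) = (𝔼[L] − (1−p)·𝔼[L·1_{E(x,y)}]) / ((1−p)·ℙ[E(x,y)])`; with `L = L_A` this is the
function `g` of the paper, with `L = L_B` it is the function `h`. -/
noncomputable def gFun (L SA SB : Ω → ℝ) (βA βB p x y : ℝ) : ℝ :=
  ((∫ ω, L ω) - (1 - p) * ∫ ω in survEvent SA SB βA βB x y, L ω) /
    ((1 - p) * ((ℙ : Measure Ω) (survEvent SA SB βA βB x y)).toReal)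

/-- The set 𝒫 of stable points. -/
noncomputable def stableSet (LA LB SA SB : Ω → ℝ) (βA βB p : ℝ) : Set (ℝ × ℝ) :=
  {q | 0 ≤ q.1 ∧ 0 ≤ q.2 ∧ 0 < (ℙ : Measure Ω) (survEvent SA SB βA βB q.1 q.2) ∧
    gFun LA SA SB βA βB p q.1 q.2 ≤ q.1 ∧ gFun LB SA SB βA βB p q.1 q.2 ≤ q.2}
theorem stmt14 [IsProbabilityMeasure (ℙ : Measure Ω)]
    (LA LB SA SB : Ω → ℝ)
    (hLA0 : ∀ ω, 0 ≤ LA ω) (hLB0 : ∀ ω, 0 ≤ LB ω)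
    (hLA : Integrable LA (ℙ : Measure Ω)) (hLB : Integrable LB (ℙ : Measure Ω))
    (hSAm : Measurable SA) (hSBm : Measurable SB)
    (βA βB : ℝ) (hβA : 0 ≤ βA) (hβB : 0 ≤ βB)
    (hLApos : 0 < ∫ ω, LA ω) (hLBpos : 0 < ∫ ω, LB ω)
    (a b : ℝ)
    (ha : a = (∫ ω, LA ω) + βB * ∫ ω, LB ω)
    (hb : b = (∫ ω, LB ω) + βA * ∫ ω, LA ω)
    (Stot : ℝ) (hStot : 0 < Stot)
    (sA sB popt : ℝ)
    (hsA : sA = Stot * a / (a + b)) (hsB : sB = Stot * b / (a + b))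
    (hpopt : popt = Stot / (Stot + a + b))
    (hSA : ∀ᵐ ω ∂(ℙ : Measure Ω), SA ω = sA)
    (hSB : ∀ᵐ ω ∂(ℙ : Measure Ω), SB ω = sB)
    (p : ℝ) (hpo : popt < p) (hp1 : p < 1) :
    stableSet LA LB SA SB βA βB p = ∅ := by

  have hmA := hLApos
  have hmB := hLBpos
  have hapos : 0 < a := by rw [ha]; positivity
  have hbpos : 0 < b := by rw [hb]; positivity
  have h1p : 0 < 1 - p := by linarith
  ext q
  obtain ⟨x, y⟩ := q
  simp only [stableSet, Set.mem_setOf_eq, Set.mem_empty_iff_false, iff_false]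
  rintro ⟨hx, hy, hPpos, hgx, hgy⟩
  set E := survEvent SA SB βA βB x y with hEdef
  have hEmeas : MeasurableSet E :=
    (measurableSet_lt measurable_const hSAm).inter (measurableSet_lt measurable_const hSBm)
  -- the attack thresholds are below the constant free spaces
  have hA : x + βB * y < sA := by
    by_contra hA
    push_neg at hA
    have hsub : E ⊆ {ω | ¬ SA ω = sA} := by
      rintro ω ⟨h1, _⟩
      exact fun h => absurd (h ▸ h1) (not_lt.2 hA)
    have : (ℙ : Measure Ω) E = 0 :=
      measure_mono_null hsub (ae_iff.mp hSA)
    simp [this] at hPpos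
  have hB : y + βA * x < sB := by
    by_contra hB
    push_neg at hB
    have hsub : E ⊆ {ω | ¬ SB ω = sB} := by
      rintro ω ⟨_, h2⟩
      exact fun h => absurd (h ▸ h2) (not_lt.2 hB)
    have : (ℙ : Measure Ω) E = 0 :=
      measure_mono_null hsub (ae_iff.mp hSB)
    simp [this] at hPpos
  -- the event E has full measure
  have hcompl : (ℙ : Measure Ω) Eᶜ = 0 := by
    have hae : ∀ᵐ ω ∂(ℙ : Measure Ω), SA ω = sA ∧ SB ω = sB := hSA.and hSB
    refine measure_mono_null ?_ (ae_iff.mp hae)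
    intro ω hω hωs
    refine hω ⟨?_, ?_⟩
    · show x + βB * y < SA ω; rw [hωs.1]; exact hA
    · show y + βA * x < SB ω; rw [hωs.2]; exact hB
  have hEuniv : E =ᵐ[(ℙ : Measure Ω)] Set.univ := ae_eq_univ.mpr hcompl
  have hP1 : (ℙ : Measure Ω) E = 1 := by
    rw [measure_congr hEuniv, measure_univ]
  have hIntA : ∫ ω in E, LA ω = ∫ ω, LA ω := by
    rw [setIntegral_congr_set hEuniv, setIntegral_univ]
  have hIntB : ∫ ω in E, LB ω = ∫ ω, LB ω := by
    rw [setIntegral_congr_set hEuniv, setIntegral_univ]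
  have hgA : gFun LA SA SB βA βB p x y = p * (∫ ω, LA ω) / (1 - p) := by
    rw [gFun, ← hEdef, hIntA, hP1]
    simp only [ENNReal.toReal_one, mul_one]
    ring_nf
  have hgB : gFun LB SA SB βA βB p x y = p * (∫ ω, LB ω) / (1 - p) := by
    rw [gFun, ← hEdef, hIntB, hP1]
    simp only [ENNReal.toReal_one, mul_one]
    ring_nf
  rw [hgA] at hgx
  rw [hgB] at hgy
  have hgx' : p * (∫ ω, LA ω) ≤ (1 - p) * x := by
    rw [div_le_iff₀ h1p] at hgx; linarith
  have hgy' : p * (∫ ω, LB ω) ≤ (1 - p) * y := by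
    rw [div_le_iff₀ h1p] at hgy; linarith
  -- combine: p*a ≤ (1-p)*(x + βB*y) and (a+b)*(x+βB*y) < Stot*a
  have hab : 0 < a + b := by linarith
  have hSpab : 0 < Stot + a + b := by linarith
  have hsum : p * a ≤ (1 - p) * (x + βB * y) := by
    rw [ha]
    nlinarith [mul_le_mul_of_nonneg_left hgy' hβB]
  have hA' : (a + b) * (x + βB * y) < Stot * a := by
    rw [hsA] at hA
    rw [← lt_div_iff₀' hab]
    calc x + βB * y < Stot * a / (a + b) := hA
    _ = Stot * a / (a + b) := rfl
  have hkey : p * a * (a + b) < (1 - p) * (Stot * a) := by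
    calc p * a * (a + b) ≤ (1 - p) * (x + βB * y) * (a + b) :=
          mul_le_mul_of_nonneg_right hsum hab.le
      _ = (1 - p) * ((a + b) * (x + βB * y)) := by ring
      _ < (1 - p) * (Stot * a) := mul_lt_mul_of_pos_left hA' h1p
  have hppos : p * (a + b) < (1 - p) * Stot := by
    have := (mul_lt_mul_iff_of_pos_right hapos).mp
      (show p * (a + b) * a < (1 - p) * Stot * a by nlinarith [hkey])
    linarith [this]
  have : p < popt := by
    rw [hpopt, lt_div_iff₀ hSpab]
    have hexp : p * (a + b) < Stot - p * Stot := by linarith [hppos]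
    linarith only [hexp]
  linarith
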